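/- arXiv:2309.04356 — 3 statements merged into one kernel-verified Lean document; each statement's English description precedes it below -/
import Mathlib

section
/- Let X be a real Hilbert space, A : X → X a strongly monotone Lipschitz continuous operator with monotonicity constant m > 0, S : C([0,T];X) → C([0,T];X) a history-dependent operator with constant L, K ⊆ X nonempty closed convex, j : X → ℝ convex and lower semicontinuous, and f ∈ C([0,T];X). If u₁, u₂ ∈ C([0,T];X) both satisfy, for every t ∈ [0,T], uᵢ(t) ∈ K and (Auᵢ(t), v - uᵢ(t)) + (Suᵢ(t), v - uᵢ(t)) + j(v) - j(uᵢ(t)) ≥ (f(t), v - uᵢ(t)) for all v ∈ K, then u₁ = u₂. -/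
open Set
open scoped InnerProductSpace

theorem stmt4 {X : Type*} [NormedAddCommGroup X] [InnerProductSpace ℝ X]
    {T m L LA : ℝ} (hT : 0 < T) (hm : 0 < m) (hL : 0 < L)
    (A : X → X)
    (hAmon : ∀ x y : X, m * ‖x - y‖ ^ 2 ≤ ⟪A x - A y, x - y⟫_ℝ)
    (hALip : ∀ x y : X, ‖A x - A y‖ ≤ LA * ‖x - y‖)
    (S : (ℝ → X) → (ℝ → X))
    (hS : ∀ u v : ℝ → X, ∀ t ∈ Icc (0:ℝ) T,
      ‖S u t - S v t‖ ≤ L * ∫ s in (0:ℝ)..t, ‖u s - v s‖)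
    (K : Set X) (hK : K.Nonempty) (hKc : IsClosed K) (hKconv : Convex ℝ K)
    (j : X → ℝ) (hj : ConvexOn ℝ univ j) (hjlsc : LowerSemicontinuous j)
    (f : ℝ → X) (hf : ContinuousOn f (Icc 0 T))
    (u₁ u₂ : ℝ → X) (hu₁ : ContinuousOn u₁ (Icc 0 T)) (hu₂ : ContinuousOn u₂ (Icc 0 T))
    (h1 : ∀ t ∈ Icc (0:ℝ) T, u₁ t ∈ K ∧ ∀ v ∈ K,
      ⟪f t, v - u₁ t⟫_ℝ ≤
        ⟪A (u₁ t), v - u₁ t⟫_ℝ + ⟪S u₁ t, v - u₁ t⟫_ℝ + j v - j (u₁ t))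
    (h2 : ∀ t ∈ Icc (0:ℝ) T, u₂ t ∈ K ∧ ∀ v ∈ K,
      ⟪f t, v - u₂ t⟫_ℝ ≤
        ⟪A (u₂ t), v - u₂ t⟫_ℝ + ⟪S u₂ t, v - u₂ t⟫_ℝ + j v - j (u₂ t)) :
    ∀ t ∈ Icc (0:ℝ) T, u₁ t = u₂ t := by
  -- continuous extensions of u₁, u₂ to all of ℝ via projection onto [0, T]
  set p : ℝ → ℝ := fun s => (projIcc (0:ℝ) T hT.le s : ℝ) with hp
  have hpcont : Continuous p := continuous_subtype_val.comp continuous_projIcc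
  have hpmem : ∀ s, p s ∈ Icc (0:ℝ) T := fun s => (projIcc (0:ℝ) T hT.le s).2
  have hpeq : ∀ s ∈ Icc (0:ℝ) T, p s = s := fun s hs => by
    simp [hp, projIcc_of_mem hT.le hs]
  set g : ℝ → ℝ := fun s => ‖u₁ (p s) - u₂ (p s)‖ with hg
  have hgcont : Continuous g := by
    apply continuous_norm.comp
    exact ((hu₁.comp_continuous hpcont hpmem).sub (hu₂.comp_continuous hpcont hpmem))
  have hgnonneg : ∀ s, 0 ≤ g s := fun s => norm_nonneg _
  set F : ℝ → ℝ := fun t => ∫ s in (0:ℝ)..t, g s with hF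
  -- F agrees with the integral of ‖u₁ - u₂‖ on [0, T]
  have hFeq : ∀ t ∈ Icc (0:ℝ) T, F t = ∫ s in (0:ℝ)..t, ‖u₁ s - u₂ s‖ := by
    intro t ht
    apply intervalIntegral.integral_congr
    intro s hs
    rw [uIcc_of_le ht.1] at hs
    have hsT : s ∈ Icc (0:ℝ) T := ⟨hs.1, hs.2.trans ht.2⟩
    simp only [hg, hpeq s hsT]
  have hFnonneg : ∀ t ∈ Icc (0:ℝ) T, 0 ≤ F t := by
    intro t ht
    exact intervalIntegral.integral_nonneg ht.1 (fun s _ => hgnonneg s)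
  -- key pointwise estimate: m * ‖u₁ t - u₂ t‖ ≤ L * F t on [0, T]
  have key : ∀ t ∈ Icc (0:ℝ) T, m * ‖u₁ t - u₂ t‖ ≤ L * F t := by
    intro t ht
    obtain ⟨hm1, hv1⟩ := h1 t ht
    obtain ⟨hm2, hv2⟩ := h2 t ht
    have e1 := hv1 (u₂ t) hm2
    have e2 := hv2 (u₁ t) hm1
    have hadd : ⟪A (u₁ t) - A (u₂ t), u₁ t - u₂ t⟫_ℝ
        ≤ ⟪S u₁ t - S u₂ t, u₂ t - u₁ t⟫_ℝ := by
      have := add_le_add e1 e2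
      simp only [inner_sub_left, inner_sub_right] at *
      nlinarith [this]
    have hCS : ⟪S u₁ t - S u₂ t, u₂ t - u₁ t⟫_ℝ ≤ ‖S u₁ t - S u₂ t‖ * ‖u₁ t - u₂ t‖ := by
      calc ⟪S u₁ t - S u₂ t, u₂ t - u₁ t⟫_ℝ ≤ ‖S u₁ t - S u₂ t‖ * ‖u₂ t - u₁ t‖ :=
            real_inner_le_norm _ _
        _ = ‖S u₁ t - S u₂ t‖ * ‖u₁ t - u₂ t‖ := by rw [norm_sub_rev (u₂ t)]
    have hSb : ‖S u₁ t - S u₂ t‖ ≤ L * F t := by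
      rw [hFeq t ht]; exact hS u₁ u₂ t ht
    have hsq : m * ‖u₁ t - u₂ t‖ ^ 2 ≤ L * F t * ‖u₁ t - u₂ t‖ := by
      calc m * ‖u₁ t - u₂ t‖ ^ 2 ≤ ⟪A (u₁ t) - A (u₂ t), u₁ t - u₂ t⟫_ℝ := hAmon _ _
        _ ≤ ⟪S u₁ t - S u₂ t, u₂ t - u₁ t⟫_ℝ := hadd
        _ ≤ ‖S u₁ t - S u₂ t‖ * ‖u₁ t - u₂ t‖ := hCS
        _ ≤ L * F t * ‖u₁ t - u₂ t‖ :=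
            mul_le_mul_of_nonneg_right hSb (norm_nonneg _)
    rcases eq_or_lt_of_le (norm_nonneg (u₁ t - u₂ t)) with h0 | h0
    · rw [← h0, mul_zero]
      exact mul_nonneg hL.le (hFnonneg t ht)
    · have := mul_le_mul_of_nonneg_right hsq (le_of_lt (inv_pos.mpr h0))
      calc m * ‖u₁ t - u₂ t‖ = m * ‖u₁ t - u₂ t‖ ^ 2 * (‖u₁ t - u₂ t‖)⁻¹ := by
            field_simp
        _ ≤ L * F t * ‖u₁ t - u₂ t‖ * (‖u₁ t - u₂ t‖)⁻¹ := this
        _ = L * F t := by field_simp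
  -- Gronwall
  have hFderiv : ∀ t : ℝ, HasDerivAt F (g t) t := by
    intro t
    exact intervalIntegral.integral_hasDerivAt_right
      (hgcont.intervalIntegrable 0 t)
      (hgcont.stronglyMeasurableAtFilter _ _)
      hgcont.continuousAt
  have hFcont : Continuous F :=
    continuous_iff_continuousAt.mpr fun t => (hFderiv t).continuousAt
  have hgron := norm_le_gronwallBound_of_norm_deriv_right_le (E := ℝ)
    (f := F) (f' := g) (δ := 0) (K := L / m) (ε := 0) (a := 0) (b := T)
    hFcont.continuousOn
    (fun x _ => (hFderiv x).hasDerivWithinAt)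
    (by simp [hF])
    (by
      intro x hx
      have hxT : x ∈ Icc (0:ℝ) T := ⟨hx.1, hx.2.le⟩
      have hgx : g x = ‖u₁ x - u₂ x‖ := by simp [hg, hpeq x hxT]
      have hk := key x hxT
      rw [Real.norm_eq_abs, Real.norm_eq_abs, abs_of_nonneg (hgnonneg x),
        abs_of_nonneg (hFnonneg x hxT), add_zero, hgx]
      rw [div_mul_eq_mul_div, le_div_iff₀ hm, mul_comm]
      linarith)
  intro t ht
  have hF0 : |F t| ≤ 0 := by
    have := hgron t ht
    rwa [sub_zero, gronwallBound_ε0_δ0, Real.norm_eq_abs] at this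
  have hFt : F t = 0 := by
    have := abs_nonneg (F t); have := abs_eq_zero.mp (le_antisymm hF0 this); linarith [abs_eq_zero.mp (le_antisymm hF0 (abs_nonneg (F t))), (abs_eq_zero.mp (le_antisymm hF0 (abs_nonneg (F t))))]
  have hk := key t ht
  rw [hFt, mul_zero] at hk
  have : ‖u₁ t - u₂ t‖ = 0 := le_antisymm (by nlinarith) (norm_nonneg _)
  have := norm_eq_zero.mp this
  exact sub_eq_zero.mp this
end

section
/- Let X be a real Hilbert space, j : X → ℝ convex, positively homogeneous with j(0)=0, σ, f, u ∈ X, with (σ, v - u) + j(v) - j(u) ≥ (f, v - u) for all v ∈ X. Define Σ = {τ ∈ X : (τ, v) + j(v) ≥ (f, v) for all v ∈ X}. Then σ ∈ Σ, and moreover (τ - σ, u) ≥ 0 for all τ ∈ Σ. -/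
open Set
open scoped InnerProductSpace

theorem stmt9 {X : Type*} [NormedAddCommGroup X] [InnerProductSpace ℝ X]
    (j : X → ℝ) (hconv : ConvexOn ℝ univ j)
    (hpos : ∀ c : ℝ, 0 ≤ c → ∀ v, j (c • v) = c * j v) (hj0 : j 0 = 0)
    (σ f u : X)
    (h : ∀ v : X, ⟪f, v - u⟫_ℝ ≤ ⟪σ, v - u⟫_ℝ + j v - j u) :
    σ ∈ {τ : X | ∀ v : X, ⟪f, v⟫_ℝ ≤ ⟪τ, v⟫_ℝ + j v} ∧
      ∀ τ ∈ {τ : X | ∀ v : X, ⟪f, v⟫_ℝ ≤ ⟪τ, v⟫_ℝ + j v}, 0 ≤ ⟪τ - σ, u⟫_ℝ := by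
  have hsub : ∀ a b : X, j (a + b) ≤ j a + j b := by
    intro a b
    have hc := hconv.2 (mem_univ a) (mem_univ b) (by norm_num : (0:ℝ) ≤ 1/2)
      (by norm_num : (0:ℝ) ≤ 1/2) (by norm_num)
    have h2 : j (a + b) = 2 * j ((1/2 : ℝ) • a + (1/2 : ℝ) • b) := by
      rw [← hpos 2 (by norm_num)]
      congr 1
      rw [smul_add, smul_smul, smul_smul]
      norm_num
    rw [smul_eq_mul, smul_eq_mul] at hc
    nlinarith [hc]
  constructor
  · intro w
    have h1 := h (u + w)
    have h2 : j (u + w) - j u ≤ j w := by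
      have := hsub u w; linarith
    have e1 : u + w - u = w := by abel
    rw [e1] at h1
    linarith
  · intro τ hτ
    have h0 := h 0
    have h2u := h ((2:ℝ) • u)
    have e0 : (0:X) - u = -u := by abel
    have e2 : (2:ℝ) • u - u = u := by
      rw [two_smul]; abel
    rw [e0] at h0
    rw [e2] at h2u
    have hj2 : j ((2:ℝ) • u) = 2 * j u := hpos 2 (by norm_num) u
    rw [hj2] at h2u
    rw [hj0] at h0
    simp only [inner_neg_right] at h0
    -- h0 : -⟪f,u⟫ ≤ -⟪σ,u⟫ + 0 - j u ; h2u : ⟪f,u⟫ ≤ ⟪σ,u⟫ + 2*j u - j u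
    have hτu := hτ u
    rw [inner_sub_left]
    linarith
end

section
/- Let V be a real Hilbert space, A : V → V strongly monotone with constant m_A and Lipschitz, S : C([0,T];V) → C([0,T];V) history-dependent with constant c₁, γ : V → L²(Γ₃) bounded linear with norm c₀. For i = 1, 2 let F_i ∈ L²(Γ₃) with F_i ≥ 0, f^i ∈ C([0,T];V), and let u_i ∈ C([0,T];V) solve, for all t and all v ∈ V: (Au_i(t), v - u_i(t)) + (Su_i(t), v - u_i(t)) + ∫_{Γ₃} F_i (γv)⁺ da - ∫_{Γ₃} F_i (γu_i(t))⁺ da ≥ (f^i(t), v - u_i(t)). Then there exists C > 0, independent of F_i and f^i, such that ‖u₁ - u₂‖_{C([0,T];V)} ≤ C(‖F₁ - F₂‖_{L²(Γ₃)} + ‖f¹ - f²‖_{C([0,T];V)}). -/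
open Set MeasureTheory
open scoped InnerProductSpace

lemma stmt17_intF {Γ : Type*} [MeasurableSpace Γ] {μ : Measure Γ} (F G : Lp ℝ 2 μ) :
    ∫ a, (F : Γ → ℝ) a * max ((G : Γ → ℝ) a) 0 ∂μ = ⟪F, Lp.posPart G⟫_ℝ := by
  rw [MeasureTheory.L2.inner_def]
  refine integral_congr_ae ?_
  filter_upwards [Lp.coeFn_posPart G] with a ha
  simp [ha, RCLike.inner_apply, mul_comm]

lemma stmt17_posPart_sub {Γ : Type*} [MeasurableSpace Γ] {μ : Measure Γ} (F G : Lp ℝ 2 μ) :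
    ‖Lp.posPart F - Lp.posPart G‖ ≤ ‖F - G‖ := by
  have h := LipschitzWith.norm_compLp_sub_le MeasureTheory.Lp.lipschitzWith_pos_part (max_eq_right le_rfl) F G
  simpa [Lp.posPart] using h

set_option maxHeartbeats 1000000 in
theorem stmt17 {V : Type*} [NormedAddCommGroup V] [InnerProductSpace ℝ V]
    {Γ : Type*} [MeasurableSpace Γ] (μ : Measure Γ)
    {T mA c₁ LA : ℝ} (hT : 0 < T) (hmA : 0 < mA) (hc₁ : 0 < c₁)
    (γ : V →L[ℝ] Lp ℝ 2 μ)
    (A : V → V)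
    (hAmon : ∀ x y : V, mA * ‖x - y‖ ^ 2 ≤ ⟪A x - A y, x - y⟫_ℝ)
    (hALip : ∀ x y : V, ‖A x - A y‖ ≤ LA * ‖x - y‖)
    (S : (ℝ → V) → (ℝ → V))
    (hS : ∀ u v : ℝ → V, ∀ t ∈ Icc (0:ℝ) T,
      ‖S u t - S v t‖ ≤ c₁ * ∫ s in (0:ℝ)..t, ‖u s - v s‖) :
    ∃ C > 0, ∀ F₁ F₂ : Lp ℝ 2 μ, 0 ≤ᵐ[μ] (F₁ : Γ → ℝ) → 0 ≤ᵐ[μ] (F₂ : Γ → ℝ) →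
      ∀ f₁ f₂ u₁ u₂ : ℝ → V,
        ContinuousOn f₁ (Icc 0 T) → ContinuousOn f₂ (Icc 0 T) →
        ContinuousOn u₁ (Icc 0 T) → ContinuousOn u₂ (Icc 0 T) →
        (∀ t ∈ Icc (0:ℝ) T, ∀ v : V,
          ⟪f₁ t, v - u₁ t⟫_ℝ ≤
            ⟪A (u₁ t), v - u₁ t⟫_ℝ + ⟪S u₁ t, v - u₁ t⟫_ℝ +
              (∫ a, (F₁ : Γ → ℝ) a * max ((γ v : Γ → ℝ) a) 0 ∂μ) -
              ∫ a, (F₁ : Γ → ℝ) a * max ((γ (u₁ t) : Γ → ℝ) a) 0 ∂μ) →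
        (∀ t ∈ Icc (0:ℝ) T, ∀ v : V,
          ⟪f₂ t, v - u₂ t⟫_ℝ ≤
            ⟪A (u₂ t), v - u₂ t⟫_ℝ + ⟪S u₂ t, v - u₂ t⟫_ℝ +
              (∫ a, (F₂ : Γ → ℝ) a * max ((γ v : Γ → ℝ) a) 0 ∂μ) -
              ∫ a, (F₂ : Γ → ℝ) a * max ((γ (u₂ t) : Γ → ℝ) a) 0 ∂μ) →
        ∀ t ∈ Icc (0:ℝ) T,
          ‖u₁ t - u₂ t‖ ≤ C * (‖F₁ - F₂‖ + ⨆ s : Icc (0:ℝ) T, ‖f₁ s - f₂ s‖) := by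
  set β := c₁ / mA with hβdef
  have hβ : 0 < β := div_pos hc₁ hmA
  refine ⟨2 * Real.exp (2 * β * T) * max 1 ‖γ‖ / mA, by positivity, ?_⟩
  intro F₁ F₂ _ _ f₁ f₂ u₁ u₂ hf₁ hf₂ hu₁ hu₂ h1 h2 t ht
  set Mf := ⨆ s : Icc (0:ℝ) T, ‖f₁ s - f₂ s‖ with hMf
  -- sup bound for f
  have hbddf : BddAbove (Set.range fun s : Icc (0:ℝ) T => ‖f₁ ↑s - f₂ ↑s‖) := by
    have hc : ContinuousOn (fun s => ‖f₁ s - f₂ s‖) (Icc 0 T) := (hf₁.sub hf₂).norm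
    have hb := (isCompact_Icc.image_of_continuousOn hc).bddAbove
    rwa [show (Set.range fun s : Icc (0:ℝ) T => ‖f₁ ↑s - f₂ ↑s‖)
        = (fun s => ‖f₁ s - f₂ s‖) '' Icc 0 T by
      rw [show (fun s : Icc (0:ℝ) T => ‖f₁ ↑s - f₂ ↑s‖)
          = ((fun s => ‖f₁ s - f₂ s‖) ∘ Subtype.val) from rfl,
        Set.range_comp, Subtype.range_coe]]
  have hMf0 : 0 ≤ Mf := Real.iSup_nonneg fun s => norm_nonneg _
  have hfle : ∀ s ∈ Icc (0:ℝ) T, ‖f₁ s - f₂ s‖ ≤ Mf := fun s hs =>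
    le_ciSup hbddf ⟨s, hs⟩
  set K := (Mf + ‖γ‖ * ‖F₁ - F₂‖) / mA with hKdef
  have hK0 : 0 ≤ K := by positivity
  set D := fun s : ℝ => ‖u₁ s - u₂ s‖ with hDdef
  have hDc : ContinuousOn D (Icc 0 T) := (hu₁.sub hu₂).norm
  -- pointwise estimate
  have key : ∀ s ∈ Icc (0:ℝ) T, D s ≤ K + β * ∫ r in (0:ℝ)..s, D r := by
    intro s hs
    have hint0 : 0 ≤ ∫ r in (0:ℝ)..s, D r :=
      intervalIntegral.integral_nonneg hs.1 fun r _ => norm_nonneg _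
    have h1' := h1 s hs (u₂ s)
    have h2' := h2 s hs (u₁ s)
    rw [stmt17_intF, stmt17_intF] at h1' h2'
    have hsub : u₂ s - u₁ s = -(u₁ s - u₂ s) := (neg_sub _ _).symm
    rw [hsub, inner_neg_right, inner_neg_right, inner_neg_right] at h1'
    set d := u₁ s - u₂ s with hddef
    have hA := hAmon (u₁ s) (u₂ s)
    rw [inner_sub_left] at hA
    set P₁ := Lp.posPart (γ (u₁ s)) with hP₁
    set P₂ := Lp.posPart (γ (u₂ s)) with hP₂
    have hP : ‖P₂ - P₁‖ ≤ ‖γ‖ * ‖d‖ := by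
      refine (stmt17_posPart_sub _ _).trans ?_
      rw [← map_sub]
      calc ‖γ (u₂ s - u₁ s)‖ ≤ ‖γ‖ * ‖u₂ s - u₁ s‖ := γ.le_opNorm _
      _ = ‖γ‖ * ‖d‖ := by rw [hsub, norm_neg]
    have hFb : ⟪F₁ - F₂, P₂ - P₁⟫_ℝ ≤ ‖F₁ - F₂‖ * (‖γ‖ * ‖d‖) :=
      (real_inner_le_norm _ _).trans (mul_le_mul_of_nonneg_left hP (norm_nonneg _))
    rw [inner_sub_left, inner_sub_right, inner_sub_right] at hFb
    have hSn : ‖S u₁ s - S u₂ s‖ ≤ c₁ * ∫ r in (0:ℝ)..s, D r := hS u₁ u₂ s hs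
    have hSin : -((c₁ * ∫ r in (0:ℝ)..s, D r) * ‖d‖) ≤ ⟪S u₁ s, d⟫_ℝ - ⟪S u₂ s, d⟫_ℝ := by
      have h0 := abs_real_inner_le_norm (S u₁ s - S u₂ s) d
      rw [inner_sub_left] at h0
      have := neg_abs_le (⟪S u₁ s, d⟫_ℝ - ⟪S u₂ s, d⟫_ℝ)
      nlinarith [norm_nonneg d, mul_le_mul_of_nonneg_right hSn (norm_nonneg d)]
    have hfd : ⟪f₁ s, d⟫_ℝ - ⟪f₂ s, d⟫_ℝ ≤ Mf * ‖d‖ := by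
      have h0 := real_inner_le_norm (f₁ s - f₂ s) d
      rw [inner_sub_left] at h0
      exact h0.trans (mul_le_mul_of_nonneg_right (hfle s hs) (norm_nonneg d))
    have hmain : mA * ‖d‖ ^ 2 ≤
        (Mf + ‖γ‖ * ‖F₁ - F₂‖ + c₁ * ∫ r in (0:ℝ)..s, D r) * ‖d‖ := by
      nlinarith [h1', h2', hA, hFb, hSin, hfd]
    have hDs : D s = ‖d‖ := rfl
    rcases eq_or_lt_of_le (norm_nonneg d) with h0 | h0
    · rw [hDs, ← h0]; positivity
    · have hmul : mA * ‖d‖ ≤ Mf + ‖γ‖ * ‖F₁ - F₂‖ + c₁ * ∫ r in (0:ℝ)..s, D r := by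
        nlinarith [hmain, h0]
      rw [hDs]
      calc ‖d‖ = mA * ‖d‖ / mA := by field_simp
      _ ≤ (Mf + ‖γ‖ * ‖F₁ - F₂‖ + c₁ * ∫ r in (0:ℝ)..s, D r) / mA :=
          (div_le_div_iff_of_pos_right hmA).mpr hmul
      _ = K + β * ∫ r in (0:ℝ)..s, D r := by rw [hKdef, hβdef]; ring
  -- Gronwall via a maximum point of the weighted function
  set lam := 2 * β with hlamdef
  have hlam : 0 < lam := by positivity
  set g := fun s : ℝ => Real.exp (-(lam * s)) * D s with hgdef
  have hgc : ContinuousOn g (Icc 0 T) := by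
    have hc : Continuous fun s : ℝ => Real.exp (-(lam * s)) := by fun_prop
    exact hc.continuousOn.mul hDc
  obtain ⟨t₀, ht₀, hmax⟩ :=
    isCompact_Icc.exists_isMaxOn (nonempty_Icc.mpr hT.le) hgc
  have hg0 : 0 ≤ g t₀ := mul_nonneg (Real.exp_pos _).le (norm_nonneg _)
  have hgt : ∀ r ∈ Icc (0:ℝ) T, g r ≤ g t₀ := fun r hr => hmax hr
  have hexp : ∀ r : ℝ, Real.exp (lam * r) * Real.exp (-(lam * r)) = 1 := by
    intro r; rw [← Real.exp_add]; simp
  have hDeq : ∀ r : ℝ, D r = Real.exp (lam * r) * g r := by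
    intro r
    rw [hgdef]
    calc D r = (Real.exp (lam * r) * Real.exp (-(lam * r))) * D r := by
          rw [hexp r, one_mul]
    _ = Real.exp (lam * r) * (Real.exp (-(lam * r)) * D r) := by ring
  -- bound g t₀
  have hintD : IntervalIntegrable D MeasureTheory.volume 0 t₀ := by
    apply ContinuousOn.intervalIntegrable
    rw [uIcc_of_le ht₀.1]
    exact hDc.mono (Icc_subset_Icc le_rfl ht₀.2)
  have hintE : IntervalIntegrable (fun r => Real.exp (lam * r) * g t₀)
      MeasureTheory.volume 0 t₀ := (Continuous.intervalIntegrable (by fun_prop) _ _)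
  have hImono : ∫ r in (0:ℝ)..t₀, D r ≤ ∫ r in (0:ℝ)..t₀, Real.exp (lam * r) * g t₀ := by
    refine intervalIntegral.integral_mono_on ht₀.1 hintD hintE ?_
    intro r hr
    rw [hDeq r]
    have hrT : r ∈ Icc (0:ℝ) T := ⟨hr.1, hr.2.trans ht₀.2⟩
    exact mul_le_mul_of_nonneg_left (hgt r hrT) (Real.exp_pos _).le
  have hIcalc : ∫ r in (0:ℝ)..t₀, Real.exp (lam * r) * g t₀
      = lam⁻¹ * (Real.exp (lam * t₀) - 1) * g t₀ := by
    rw [intervalIntegral.integral_mul_const]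
    congr 1
    rw [intervalIntegral.integral_comp_mul_left (fun u => Real.exp u) hlam.ne']
    simp [Real.exp_zero, smul_eq_mul]
  have hkt₀ := key t₀ ht₀
  have hgbound : g t₀ ≤ 2 * K := by
    have hDt₀ : D t₀ ≤ K + β * (lam⁻¹ * (Real.exp (lam * t₀) - 1) * g t₀) := by
      calc D t₀ ≤ K + β * ∫ r in (0:ℝ)..t₀, D r := hkt₀
      _ ≤ K + β * ∫ r in (0:ℝ)..t₀, Real.exp (lam * r) * g t₀ := by
          exact add_le_add_right (mul_le_mul_of_nonneg_left hImono hβ.le) K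
      _ = K + β * (lam⁻¹ * (Real.exp (lam * t₀) - 1) * g t₀) := by rw [hIcalc]
    have hbl : β * lam⁻¹ = 1 / 2 := by
      rw [hlamdef]; field_simp
    have he1 : Real.exp (-(lam * t₀)) ≤ 1 :=
      Real.exp_le_one_iff.mpr (by nlinarith [ht₀.1])
    have he0 : 0 < Real.exp (-(lam * t₀)) := Real.exp_pos _
    have heq : g t₀ = Real.exp (-(lam * t₀)) * D t₀ := rfl
    have hkey : Real.exp (-(lam * t₀)) * (K + β * (lam⁻¹ * (Real.exp (lam * t₀) - 1) * g t₀))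
        = Real.exp (-(lam * t₀)) * K
          + (1/2) * (g t₀ - Real.exp (-(lam * t₀)) * g t₀) := by
      calc Real.exp (-(lam * t₀)) * (K + β * (lam⁻¹ * (Real.exp (lam * t₀) - 1) * g t₀))
          = Real.exp (-(lam * t₀)) * K + (β * lam⁻¹) *
            ((Real.exp (lam * t₀) * Real.exp (-(lam * t₀))) * g t₀
              - Real.exp (-(lam * t₀)) * g t₀) := by ring
      _ = _ := by rw [hbl, hexp t₀]; ring
    have hch : g t₀ ≤ Real.exp (-(lam * t₀)) * K
        + (1/2) * (g t₀ - Real.exp (-(lam * t₀)) * g t₀) := by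
      rw [heq, ← hkey]
      exact mul_le_mul_of_nonneg_left hDt₀ he0.le
    have h5 : Real.exp (-(lam * t₀)) * K ≤ K := mul_le_of_le_one_left hK0 he1
    have h6 : 0 ≤ Real.exp (-(lam * t₀)) * g t₀ := mul_nonneg he0.le hg0
    linarith
  -- conclude at t
  have hDt : D t ≤ Real.exp (lam * T) * (2 * K) := by
    rw [hDeq t]
    have h1' : g t ≤ 2 * K := (hgt t ht).trans hgbound
    have h2' : Real.exp (lam * t) ≤ Real.exp (lam * T) :=
      Real.exp_le_exp.mpr (by nlinarith [ht.2])
    calc Real.exp (lam * t) * g t ≤ Real.exp (lam * t) * (2 * K) :=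
          mul_le_mul_of_nonneg_left h1' (Real.exp_pos _).le
    _ ≤ Real.exp (lam * T) * (2 * K) :=
          mul_le_mul_of_nonneg_right h2' (by positivity)
  refine hDt.trans ?_
  have hmax1 : (1:ℝ) ≤ max 1 ‖γ‖ := le_max_left _ _
  have hmaxγ : ‖γ‖ ≤ max 1 ‖γ‖ := le_max_right _ _
  have hF0 : 0 ≤ ‖F₁ - F₂‖ := norm_nonneg _
  have hlamT : lam * T = 2 * β * T := by rw [hlamdef]
  rw [hlamT, hKdef]
  have hE : 0 < Real.exp (2 * β * T) := Real.exp_pos _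
  have h1' : Mf + ‖γ‖ * ‖F₁ - F₂‖ ≤ max 1 ‖γ‖ * (‖F₁ - F₂‖ + Mf) := by
    nlinarith [mul_le_mul_of_nonneg_right hmaxγ hF0, mul_le_mul_of_nonneg_right hmax1 hMf0]
  calc Real.exp (2 * β * T) * (2 * ((Mf + ‖γ‖ * ‖F₁ - F₂‖) / mA))
      = (Real.exp (2 * β * T) * 2 * (Mf + ‖γ‖ * ‖F₁ - F₂‖)) / mA := by ring
  _ ≤ (Real.exp (2 * β * T) * 2 * (max 1 ‖γ‖ * (‖F₁ - F₂‖ + Mf))) / mA := by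
      apply (div_le_div_iff_of_pos_right hmA).mpr
      nlinarith [h1']
  _ = 2 * Real.exp (2 * β * T) * max 1 ‖γ‖ / mA * (‖F₁ - F₂‖ + Mf) := by ring
end
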